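/- Let N ≥ 1, c > 0, and 0 < ξ < c, and define the complex polynomial p(z) = z^{4N+6} + (ξ/c) z^{4N+5} − (ξ/c) z + 1. If p(z) = 0 and Re z > 0, then |z| < 1; if p(z) = 0 and Re z < 0, then |z| > 1. -/

import Mathlib

open Complex

/-- for p(z) = z^{4N+6} + (ξ/c)z^{4N+5} − (ξ/c)z + 1 with 0 < ξ < c:
roots with positive real part lie inside the unit circle, and roots with negative
real part lie outside. -/
theorem charPoly_roots_location (N : ℕ) (hN : 1 ≤ N) (c ξ : ℝ) (hc : 0 < c)
    (hξ0 : 0 < ξ) (hξc : ξ < c) :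
    ∀ z : ℂ, z^(4*N+6) + ((ξ/c : ℝ) : ℂ)*z^(4*N+5) - ((ξ/c : ℝ) : ℂ)*z + 1 = 0 →
      (0 < z.re → ‖z‖ < 1) ∧ (z.re < 0 → 1 < ‖z‖) := by
  intro z hz
  set a : ℝ := ξ / c with ha
  have ha0 : 0 < a := div_pos hξ0 hc
  have ha1 : a < 1 := (div_lt_one hc).mpr hξc
  have h6 : z ^ (4*N+6) = z ^ (4*N+5) * z := by rw [← pow_succ]
  have key : z ^ (4*N+5) * (z + (a:ℂ)) = (a:ℂ) * z - 1 := by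
    linear_combination hz - h6
  have habs : (‖z‖) ^ (4*N+5) * ‖z + (a:ℂ)‖
      = ‖(a:ℂ) * z - 1‖ := by
    rw [← norm_pow, ← norm_mul, key]
  have hdiff : (‖(a:ℂ) * z - 1‖)^2 - (‖z + (a:ℂ)‖)^2
      = (1 - a^2) * (1 - (‖z‖)^2) - 4 * a * z.re := by
    rw [Complex.sq_norm, Complex.sq_norm, Complex.sq_norm]
    simp [Complex.normSq_apply, Complex.add_re, Complex.add_im, Complex.mul_re,
      Complex.mul_im, Complex.sub_re, Complex.sub_im, Complex.ofReal_re,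
      Complex.ofReal_im]
    ring
  have hzn : 0 ≤ ‖z‖ := norm_nonneg z
  have hAn : 0 ≤ ‖z + (a:ℂ)‖ := norm_nonneg _
  have hBn : 0 ≤ ‖(a:ℂ) * z - 1‖ := norm_nonneg _
  constructor
  · intro hre
    by_contra hle
    push_neg at hle
    have h1 : (1:ℝ) ≤ (‖z‖)^2 := one_le_pow₀ hle
    have h2 : (1 - a^2) * (1 - (‖z‖)^2) ≤ 0 :=
      mul_nonpos_of_nonneg_of_nonpos (by nlinarith) (by linarith)
    have hsq : (‖(a:ℂ) * z - 1‖)^2 < (‖z + (a:ℂ)‖)^2 := by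
      nlinarith [mul_pos ha0 hre]
    have hB : ‖(a:ℂ) * z - 1‖ < ‖z + (a:ℂ)‖ := by
      nlinarith [hAn, hBn]
    have hpow : (1:ℝ) ≤ (‖z‖) ^ (4*N+5) := one_le_pow₀ hle
    have := mul_le_mul_of_nonneg_right hpow hAn
    rw [one_mul] at this
    linarith [habs ▸ this]
  · intro hre
    by_contra hge
    push_neg at hge
    have h1 : (‖z‖)^2 ≤ 1 := pow_le_one₀ hzn hge
    have h2 : 0 ≤ (1 - a^2) * (1 - (‖z‖)^2) :=
      mul_nonneg (by nlinarith) (by linarith)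
    have hsq : (‖z + (a:ℂ)‖)^2 < (‖(a:ℂ) * z - 1‖)^2 := by
      nlinarith [mul_pos ha0 (neg_pos.mpr hre)]
    have hB : ‖z + (a:ℂ)‖ < ‖(a:ℂ) * z - 1‖ := by
      nlinarith [hAn, hBn]
    have hpow : (‖z‖) ^ (4*N+5) ≤ 1 := pow_le_one₀ hzn hge
    have := mul_le_mul_of_nonneg_right hpow hAn
    rw [one_mul] at this
    linarith [habs ▸ this]
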